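/- Let f = x_{i₁1}x_{i₂2}···x_{i_dd} with 1 ≤ i₁ ≤ i₂ ≤ ··· ≤ i_d ≤ n be a generator of B_{nd}, and let m be a monomial of degree d in S̃ such that for every a with 1 ≤ a ≤ n, the monomial (∏_{j : i_j ≠ a} x_{aj})·m lies in B_{nd} (i.e., is divisible by a generator of B_{nd}). Then m itself lies in B_{nd}. Consequently, a proper first order deformation of a generator of B_{nd} cannot vanish when pushed toward every vertex, so it can be pushed to at least one vertex. -/

import Mathlib

/-!
Statement 12: Let `f = x_{i₁1}x_{i₂2}⋯x_{i_dd}` (with `i₁ ≤ ⋯ ≤ i_d`) be a generator of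
the box polarization `B_{nd}`, and let `m` be a monomial of degree `d` such that for every
`a`, the monomial `(∏_{j : i_j ≠ a} x_{aj})·m` lies in `B_{nd}`.  Then `m ∈ B_{nd}`.
(Hence a proper first order deformation of a generator of `B_{nd}` cannot vanish when
pushed toward every vertex.)
-/

set_option synthInstance.maxHeartbeats 800000
set_option maxHeartbeats 1600000

open MvPolynomial

noncomputable section

/-- The box polarization `B_{nd}` of `m^d`. -/
def BoxIdeal (k : Type) [Field k] (n d : ℕ) : Ideal (MvPolynomial (Fin n × Fin d) k) :=
  Ideal.span {f | ∃ i : Fin d → Fin n, Monotone i ∧ f = ∏ j : Fin d, X (i j, j)}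

/-- `f` is a monomial (with coefficient `1`). -/
def IsMonomial (k : Type) [Field k] (σ : Type) (f : MvPolynomial σ k) : Prop :=
  ∃ u : σ →₀ ℕ, f = monomial u 1

lemma prod_X_eq_monomial' {σ ι k : Type} [Field k] (t : Finset ι) (g : ι → σ) :
    (∏ j ∈ t, (X (g j) : MvPolynomial σ k)) =
      monomial (∑ j ∈ t, Finsupp.single (g j) 1) 1 := by
  classical
  induction t using Finset.cons_induction with
  | empty => simp
  | cons a s ha ih =>
      rw [Finset.prod_cons, Finset.sum_cons, ih, X, monomial_mul, one_mul]

lemma boxIdeal_eq (k : Type) [Field k] (n d : ℕ) :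
    BoxIdeal k n d = Ideal.span ((fun s => monomial s (1 : k)) ''
      {w | ∃ i : Fin d → Fin n, Monotone i ∧ w = ∑ j : Fin d, Finsupp.single (i j, j) 1}) := by
  unfold BoxIdeal
  congr 1
  ext f
  constructor
  · rintro ⟨i, hi, rfl⟩
    exact ⟨_, ⟨i, hi, rfl⟩, (prod_X_eq_monomial' _ _).symm⟩
  · rintro ⟨w, ⟨i, hi, rfl⟩, rfl⟩
    exact ⟨i, hi, (prod_X_eq_monomial' _ _).symm⟩

lemma mem_box_iff {k : Type} [Field k] {n d : ℕ} (u : (Fin n × Fin d) →₀ ℕ) :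
    (monomial u 1 : MvPolynomial (Fin n × Fin d) k) ∈ BoxIdeal k n d ↔
      ∃ c : Fin d → Fin n, Monotone c ∧ ∀ j, 1 ≤ u (c j, j) := by
  classical
  rw [boxIdeal_eq, mem_ideal_span_monomial_image]
  constructor
  · intro H
    have hu : u ∈ (monomial u (1:k)).support := by
      rw [support_monomial, if_neg one_ne_zero]; exact Finset.mem_singleton_self u
    obtain ⟨w, ⟨c, hc, rfl⟩, hle⟩ := H u hu
    refine ⟨c, hc, fun j => ?_⟩
    have h1 : (1 : ℕ) ≤ (∑ j' : Fin d, Finsupp.single (c j', j') 1) (c j, j) := by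
      rw [Finsupp.finset_sum_apply]
      have : (Finsupp.single ((c j, j) : Fin n × Fin d) 1) (c j, j) = 1 := by simp
      calc (1:ℕ) = (Finsupp.single ((c j, j) : Fin n × Fin d) 1) (c j, j) := this.symm
        _ ≤ _ := Finset.single_le_sum (f := fun j' => (Finsupp.single ((c j', j') : Fin n × Fin d) 1) (c j, j)) (fun _ _ => Nat.zero_le _) (Finset.mem_univ j)
    exact le_trans h1 (hle (c j, j))
  · rintro ⟨c, hc, hcu⟩
    intro xi hxi
    rw [support_monomial, if_neg one_ne_zero, Finset.mem_singleton] at hxi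
    subst hxi
    refine ⟨∑ j : Fin d, Finsupp.single (c j, j) 1, ⟨c, hc, rfl⟩, ?_⟩
    intro p
    obtain ⟨b, j₀⟩ := p
    rw [Finsupp.finset_sum_apply]
    rw [Finset.sum_eq_single_of_mem j₀ (Finset.mem_univ j₀)
      (fun j _ hj => Finsupp.single_eq_of_ne' (by simp [hj]))]
    rw [Finsupp.single_apply]
    split_ifs with hcb
    · have : c j₀ = b := by simpa using congrArg Prod.fst hcb
      exact this ▸ hcu j₀
    · exact Nat.zero_le _

lemma monotone_of_adj {d n : ℕ} {s : Fin d → Fin n}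
    (H : ∀ (t : ℕ) (h : t + 1 < d), s ⟨t, by omega⟩ ≤ s ⟨t + 1, h⟩) : Monotone s := by
  cases d with
  | zero => exact fun j => absurd j.2 (by omega)
  | succ d' =>
      rw [Fin.monotone_iff_le_succ]
      intro t
      have := H t.val (by omega)
      exact this

theorem statement12 (k : Type) [Field k] (n d : ℕ)
    (i : Fin d → Fin n) (hi : Monotone i)
    (m : MvPolynomial (Fin n × Fin d) k)
    (hm : IsMonomial k (Fin n × Fin d) m) (hmd : m.totalDegree = d)
    (h : ∀ a : Fin n,
      (∏ j : Fin d, if i j ≠ a then X (a, j) else 1) * m ∈ BoxIdeal k n d) :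
    m ∈ BoxIdeal k n d := by
  classical
  obtain ⟨u, rfl⟩ := hm
  -- reformulate the hypothesis
  have key : ∀ a : Fin n, ∃ c : Fin d → Fin n, Monotone c ∧
      ∀ j, 1 ≤ u (c j, j) ∨ (c j = a ∧ i j ≠ a) := by
    intro a
    have hmem := h a
    set v : (Fin n × Fin d) →₀ ℕ :=
      ∑ j ∈ Finset.univ.filter (fun j => i j ≠ a), Finsupp.single (a, j) 1 with hv
    have hprod : (∏ j : Fin d, if i j ≠ a then X (a, j) else 1) *
        (monomial u 1 : MvPolynomial (Fin n × Fin d) k) = monomial (v + u) 1 := by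
      rw [← Finset.prod_filter, prod_X_eq_monomial', monomial_mul, one_mul]
    rw [hprod, mem_box_iff] at hmem
    obtain ⟨c, hc, hcu⟩ := hmem
    refine ⟨c, hc, fun j => ?_⟩
    by_cases hca : c j = a ∧ i j ≠ a
    · exact Or.inr hca
    · left
      have hv0 : v (c j, j) = 0 := by
        rw [hv, Finsupp.finset_sum_apply]
        refine Finset.sum_eq_zero (fun j' hj' => ?_)
        rw [Finset.mem_filter] at hj'
        refine Finsupp.single_eq_of_ne' (fun hEq => ?_)
        have h1 : a = c j := congrArg Prod.fst hEq
        have h2 : j' = j := congrArg Prod.snd hEq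
        exact hca ⟨h1.symm, h2 ▸ hj'.2⟩
      have := hcu j
      rw [Finsupp.add_apply, hv0, zero_add] at this
      exact this
  -- column sums
  set e : Fin d → ℕ := fun j => ∑ b : Fin n, u (b, j) with he
  have hsum : ∑ j : Fin d, e j = d := by
    have h1 : (monomial u (1:k)).totalDegree = u.sum fun _ e => e :=
      totalDegree_monomial u one_ne_zero
    have h2 : u.sum (fun _ e => e) = ∑ p : Fin n × Fin d, u p :=
      Finsupp.sum_fintype _ _ (fun _ => rfl)
    rw [h1, h2] at hmd
    calc ∑ j : Fin d, e j = ∑ b : Fin n, ∑ j : Fin d, u (b, j) := Finset.sum_comm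
      _ = ∑ p : Fin n × Fin d, u p := (Fintype.sum_prod_type (f := fun p : Fin n × Fin d => u p)).symm
      _ = d := hmd
  -- no empty column
  by_cases hcol : ∀ j : Fin d, ∃ b : Fin n, 1 ≤ u (b, j)
  · -- each column has total degree exactly 1
    have he1 : ∀ j, 1 ≤ e j := by
      intro j
      obtain ⟨b, hb⟩ := hcol j
      calc (1:ℕ) ≤ u (b, j) := hb
        _ ≤ e j := Finset.single_le_sum (f := fun b => u (b, j))
              (fun _ _ => Nat.zero_le _) (Finset.mem_univ b)
    have heq1 : ∀ j, e j = 1 := by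
      by_contra hne
      push_neg at hne
      obtain ⟨j₀, hj₀⟩ := hne
      have h2 : 2 ≤ e j₀ := by
        have := he1 j₀; omega
      have hlt : (∑ _j : Fin d, 1) < ∑ j : Fin d, e j :=
        Finset.sum_lt_sum (fun j _ => he1 j) ⟨j₀, Finset.mem_univ _, by omega⟩
      simp only [Finset.sum_const, Finset.card_univ, Fintype.card_fin, smul_eq_mul,
        mul_one] at hlt
      omega
    -- uniqueness of the element in each column
    have huniq : ∀ (j : Fin d) (b b' : Fin n), 1 ≤ u (b, j) → 1 ≤ u (b', j) → b = b' := by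
      intro j b b' hb hb'
      by_contra hbb
      have hpair : ({b, b'} : Finset (Fin n)) ⊆ Finset.univ := Finset.subset_univ _
      have h2 : u (b, j) + u (b', j) ≤ e j := by
        rw [he]
        calc u (b, j) + u (b', j) = ∑ a ∈ ({b, b'} : Finset (Fin n)), u (a, j) :=
              (Finset.sum_pair (f := fun a => u (a, j)) hbb).symm
          _ ≤ ∑ a : Fin n, u (a, j) :=
              Finset.sum_le_sum_of_subset hpair
      have := heq1 j
      omega
    choose s hs using hcol
    by_cases hmono : Monotone s
    · exact (mem_box_iff u).mpr ⟨s, hmono, hs⟩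
    · -- find an adjacent descent
      exfalso
      have : ∃ (t : ℕ) (ht : t + 1 < d), s ⟨t + 1, ht⟩ < s ⟨t, by omega⟩ := by
        by_contra hno
        push_neg at hno
        exact hmono (monotone_of_adj (fun t ht => hno t ht))
      obtain ⟨t, ht, hdesc⟩ := this
      set t0 : Fin d := ⟨t, by omega⟩ with ht0
      set t1 : Fin d := ⟨t + 1, ht⟩ with ht1
      have ht01 : t0 ≤ t1 := by simp [ht0, ht1, Fin.le_def]
      have hitt : i t0 ≤ i t1 := hi ht01
      by_cases hA : i t0 < s t0
      · -- push toward a = i t0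
        obtain ⟨c, hc, hcu⟩ := key (i t0)
        have hct0 : c t0 = s t0 := by
          rcases hcu t0 with h1 | h2
          · exact huniq t0 _ _ h1 (hs t0)
          · exact absurd rfl h2.2
        have hcle : c t0 ≤ c t1 := hc ht01
        rcases hcu t1 with h1 | h2
        · have : c t1 = s t1 := huniq t1 _ _ h1 (hs t1)
          rw [hct0, this] at hcle
          exact absurd hcle (not_le.mpr hdesc)
        · rw [hct0, h2.1] at hcle
          exact absurd hcle (not_le.mpr hA)
      · by_cases hB : s t1 < i t1
        · -- push toward a = i t1
          obtain ⟨c, hc, hcu⟩ := key (i t1)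
          have hct1 : c t1 = s t1 := by
            rcases hcu t1 with h1 | h2
            · exact huniq t1 _ _ h1 (hs t1)
            · exact absurd rfl h2.2
          have hcle : c t0 ≤ c t1 := hc ht01
          rcases hcu t0 with h1 | h2
          · have : c t0 = s t0 := huniq t0 _ _ h1 (hs t0)
            rw [hct1, this] at hcle
            exact absurd hcle (not_le.mpr hdesc)
          · rw [hct1, h2.1] at hcle
            exact absurd hcle (not_le.mpr hB)
        · push_neg at hA hB
          have : s t0 ≤ s t1 := le_trans hA (le_trans hitt hB)
          exact absurd this (not_le.mpr hdesc)
  · -- some column is empty : contradiction with the hypothesis at a = i j₀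
    push_neg at hcol
    obtain ⟨j₀, hj₀⟩ := hcol
    obtain ⟨c, hc, hcu⟩ := key (i j₀)
    rcases hcu j₀ with h1 | h2
    · exact absurd h1 (by have := hj₀ (c j₀); omega)
    · exact absurd rfl h2.2

end
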